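/- Let X and Y be real-valued random variables and n ∈ ℕ with E[X²] < ∞, E[Y^{2n}] < ∞, and |supp(Y)| > n. Let M := M_{Y,n} be the Hankel moment matrix and v := (E[X·Y^j])_{0≤j≤n} ∈ ℝ^{n+1}. Then M is invertible, the vector c* := M⁻¹ v minimizes c ↦ E[(X − Σ_{j=0}^n c_j Y^j)²] over ℝ^{n+1}, and the minimum value satisfies pmmse_n(X|Y) = E[X²] − vᵀ M⁻¹ v. -/

import Mathlib

open MeasureTheory ProbabilityTheory Matrix

/-- The `n`-th polynomial minimum mean-square error of estimating `X` from `Y`. -/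
noncomputable def pmmse {Ω : Type*} [MeasurableSpace Ω] (P : Measure Ω)
    (X Y : Ω → ℝ) (n : ℕ) : ℝ :=
  ⨅ c : Fin (n + 1) → ℝ, ∫ ω, (X ω - ∑ j : Fin (n + 1), c j * Y ω ^ (j : ℕ)) ^ 2 ∂P

/-- The Hankel moment matrix `M_{Y,n} = (E[Y^{i+j}])_{0 ≤ i,j ≤ n}`. -/
noncomputable def hankelMoment {Ω : Type*} [MeasurableSpace Ω] (P : Measure Ω)
    (Y : Ω → ℝ) (n : ℕ) : Matrix (Fin (n + 1)) (Fin (n + 1)) ℝ :=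
  Matrix.of fun i j => ∫ ω, Y ω ^ ((i : ℕ) + (j : ℕ)) ∂P

/-- The vector `v = (E[X·Y^j])_{0 ≤ j ≤ n}`. -/
noncomputable def momVec {Ω : Type*} [MeasurableSpace Ω] (P : Measure Ω)
    (X Y : Ω → ℝ) (n : ℕ) : Fin (n + 1) → ℝ :=
  fun j => ∫ ω, X ω * Y ω ^ (j : ℕ) ∂P

/-- With `E[X²] < ∞`, `E[Y^{2n}] < ∞`, and `|supp(Y)| > n`: the Hankel
moment matrix `M := M_{Y,n}` is invertible, `c* = M⁻¹ v` minimizes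
`c ↦ E[(X - ∑_j c_j Y^j)²]`, and `pmmse_n(X|Y) = E[X²] - vᵀ M⁻¹ v`. -/
theorem pmmse_formula
    {Ω : Type*} [MeasurableSpace Ω] (P : Measure Ω) [IsProbabilityMeasure P]
    (X Y : Ω → ℝ) (hXm : Measurable X) (hYm : Measurable Y) (n : ℕ)
    (hX2 : MemLp X 2 P)
    (hY : Integrable (fun ω => Y ω ^ (2 * n)) P)
    (hsupp : ∀ S : Finset ℝ, S.card ≤ n → P (Y ⁻¹' (S : Set ℝ)) ≠ 1) :
    IsUnit (hankelMoment P Y n) ∧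
      (∀ c : Fin (n + 1) → ℝ,
        (∫ ω, (X ω - ∑ j : Fin (n + 1),
            ((hankelMoment P Y n)⁻¹.mulVec (momVec P X Y n)) j * Y ω ^ (j : ℕ)) ^ 2 ∂P) ≤
          ∫ ω, (X ω - ∑ j : Fin (n + 1), c j * Y ω ^ (j : ℕ)) ^ 2 ∂P) ∧
      pmmse P X Y n =
        (∫ ω, X ω ^ 2 ∂P) -
          momVec P X Y n ⬝ᵥ ((hankelMoment P Y n)⁻¹.mulVec (momVec P X Y n)) := by
  classical
  set M := hankelMoment P Y n with hMdef
  set v := momVec P X Y n with hvdef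
  -- integrability of powers of Y
  have hYnn : ∀ ω, (0:ℝ) ≤ Y ω ^ (2 * n) := fun ω => (even_two_mul n).pow_nonneg _
  have hYk : ∀ k, k ≤ 2 * n → Integrable (fun ω => Y ω ^ k) P := by
    intro k hk
    refine Integrable.mono' ((integrable_const (1:ℝ)).add hY)
      ((hYm.pow_const k).aestronglyMeasurable) ?_
    filter_upwards with ω
    simp only [Pi.add_apply]
    have h2n : Y ω ^ (2 * n) = |Y ω| ^ (2 * n) := by
      rw [← abs_pow, abs_of_nonneg (hYnn ω)]
    rw [Real.norm_eq_abs, abs_pow]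
    rcases le_total (|Y ω|) 1 with h1 | h1
    · have hle : |Y ω| ^ k ≤ 1 := pow_le_one₀ (abs_nonneg _) h1
      have := hYnn ω
      linarith
    · have hle : |Y ω| ^ k ≤ |Y ω| ^ (2 * n) := pow_le_pow_right₀ h1 hk
      rw [h2n]; linarith
  have hX2i : Integrable (fun ω => X ω ^ 2) P :=
    (memLp_two_iff_integrable_sq hX2.aestronglyMeasurable).mp hX2
  have hXY : ∀ j : Fin (n + 1), Integrable (fun ω => X ω * Y ω ^ (j : ℕ)) P := by
    intro j
    have h2j : Integrable (fun ω => Y ω ^ (2 * (j : ℕ))) P := hYk _ (by omega)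
    refine Integrable.mono' ((hX2i.add h2j).const_mul (1/2))
      ((hXm.mul (hYm.pow_const _)).aestronglyMeasurable) ?_
    filter_upwards with ω
    simp only [Pi.add_apply]
    have e2 : |Y ω ^ (j:ℕ)| ^ 2 = Y ω ^ (2 * (j:ℕ)) := by
      rw [sq_abs, ← pow_mul, Nat.mul_comm]
    have h1 : 2 * (|X ω| * |Y ω ^ (j:ℕ)|) ≤ |X ω| ^ 2 + |Y ω ^ (j:ℕ)| ^ 2 := by
      nlinarith [sq_nonneg (|X ω| - |Y ω ^ (j:ℕ)|)]
    rw [Real.norm_eq_abs, abs_mul]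
    rw [← sq_abs (X ω), ← e2]
    linarith
  -- pointwise square of a polynomial in Y
  have hsq : ∀ (d : Fin (n + 1) → ℝ) ω,
      (∑ j : Fin (n + 1), d j * Y ω ^ (j : ℕ)) ^ 2
        = ∑ i : Fin (n + 1), ∑ j : Fin (n + 1), (d i * d j) * Y ω ^ ((i : ℕ) + (j : ℕ)) := by
    intro d ω
    rw [sq, Finset.sum_mul_sum]
    exact Finset.sum_congr rfl fun i _ => Finset.sum_congr rfl fun j _ => by
      rw [pow_add]; ring
  have hIdd : ∀ d : Fin (n + 1) → ℝ, Integrable (fun ω =>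
      ∑ i : Fin (n + 1), ∑ j : Fin (n + 1), (d i * d j) * Y ω ^ ((i : ℕ) + (j : ℕ))) P :=
    fun d => integrable_finset_sum _ fun i _ => integrable_finset_sum _ fun j _ =>
      ((hYk _ (by omega)).const_mul _)
  have hm2 : ∀ d : Fin (n + 1) → ℝ,
      ∫ ω, (∑ i : Fin (n + 1), ∑ j : Fin (n + 1), (d i * d j) * Y ω ^ ((i : ℕ) + (j : ℕ))) ∂P
        = d ⬝ᵥ M.mulVec d := by
    intro d
    rw [integral_finset_sum _ (fun i _ => integrable_finset_sum _ fun j _ =>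
      ((hYk _ (by omega)).const_mul _))]
    simp only [dotProduct, Matrix.mulVec, Finset.mul_sum]
    refine Finset.sum_congr rfl fun i _ => ?_
    rw [integral_finset_sum _ (fun j _ => ((hYk _ (by omega)).const_mul _))]
    refine Finset.sum_congr rfl fun j _ => ?_
    rw [integral_const_mul]
    simp only [hMdef, hankelMoment, Matrix.of_apply]
    ring
  have hquad : ∀ d : Fin (n + 1) → ℝ,
      d ⬝ᵥ M.mulVec d = ∫ ω, (∑ j : Fin (n + 1), d j * Y ω ^ (j : ℕ)) ^ 2 ∂P := by
    intro d
    rw [← hm2 d]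
    exact (integral_congr_ae (Filter.Eventually.of_forall fun ω => (hsq d ω))).symm
  have hqnonneg : ∀ d : Fin (n + 1) → ℝ, 0 ≤ d ⬝ᵥ M.mulVec d := by
    intro d
    rw [hquad d]
    exact integral_nonneg fun ω => sq_nonneg _
  -- positive definiteness
  have hherm : M.IsHermitian := by
    ext i j
    simp only [hMdef, Matrix.conjTranspose_apply, hankelMoment, Matrix.of_apply, star_trivial]
    rw [add_comm (j : ℕ)]
  have hpos : M.PosDef := by
    refine Matrix.PosDef.of_dotProduct_mulVec_pos hherm fun d hd => ?_
    have hstar : star d = d := by simp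
    rw [hstar]
    rcases lt_or_eq_of_le (hqnonneg d) with h | h
    · exact h
    · exfalso
      -- the polynomial with coefficients d
      set p : Polynomial ℝ := ∑ j : Fin (n + 1), Polynomial.C (d j) * Polynomial.X ^ (j : ℕ)
        with hp
      have hcoeff : ∀ j : Fin (n + 1), p.coeff (j : ℕ) = d j := by
        intro j
        rw [hp, Polynomial.finset_sum_coeff]
        rw [Finset.sum_eq_single j]
        · simp [Polynomial.coeff_C_mul, Polynomial.coeff_X_pow]
        · intro i _ hij
          simp only [Polynomial.coeff_C_mul, Polynomial.coeff_X_pow]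
          rw [if_neg (by simpa [Fin.val_eq_val] using (Ne.symm hij))]
          ring
        · simp
      have hpne : p ≠ 0 := by
        obtain ⟨j, hj⟩ := Function.ne_iff.mp hd
        intro h0
        apply hj
        have := hcoeff j
        rw [h0, Polynomial.coeff_zero] at this
        simpa using this.symm
      have hdeg : p.natDegree ≤ n := by
        rw [hp]
        refine Polynomial.natDegree_sum_le_of_forall_le _ _ fun j _ => ?_
        refine le_trans (Polynomial.natDegree_C_mul_le _ _) ?_
        rw [Polynomial.natDegree_X_pow]
        exact Nat.le_of_lt_succ j.isLt
      set S : Finset ℝ := p.roots.toFinset with hS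
      have hcard : S.card ≤ n :=
        le_trans (Multiset.toFinset_card_le _) (le_trans (Polynomial.card_roots' p) hdeg)
      have heval : ∀ ω, Polynomial.eval (Y ω) p = ∑ j : Fin (n + 1), d j * Y ω ^ (j : ℕ) := by
        intro ω
        rw [hp]
        simp [Polynomial.eval_finset_sum]
      have hintsq : Integrable (fun ω => (∑ j : Fin (n + 1), d j * Y ω ^ (j : ℕ)) ^ 2) P :=
        (hIdd d).congr (Filter.Eventually.of_forall fun ω => (hsq d ω).symm)
      have hz : ∀ᵐ ω ∂P, (∑ j : Fin (n + 1), d j * Y ω ^ (j : ℕ)) = 0 := by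
        have h0 : ∫ ω, (∑ j : Fin (n + 1), d j * Y ω ^ (j : ℕ)) ^ 2 ∂P = 0 := by
          rw [← hquad d, ← h]
        have := (integral_eq_zero_iff_of_nonneg (fun ω => sq_nonneg _) hintsq).mp h0
        filter_upwards [this] with ω hω
        exact sq_eq_zero_iff.mp (by simpa using hω)
      have hmem : ∀ᵐ ω ∂P, Y ω ∈ (S : Set ℝ) := by
        filter_upwards [hz] with ω hω
        simp only [hS, Finset.mem_coe, Multiset.mem_toFinset]
        exact (Polynomial.mem_roots hpne).mpr (by rw [Polynomial.IsRoot, heval]; exact hω)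
      have hone : P (Y ⁻¹' (S : Set ℝ)) = 1 := by
        rw [← prob_compl_eq_zero_iff (hYm S.finite_toSet.measurableSet)]
        have := ae_iff.mp hmem
        simpa [Set.preimage, Set.compl_setOf] using this
      exact hsupp S hcard hone
  have hunit : IsUnit M := hpos.isUnit
  have hdet : IsUnit M.det := (Matrix.isUnit_iff_isUnit_det M).mp hunit
  set cs : Fin (n + 1) → ℝ := M⁻¹.mulVec v with hcs
  have hMc : M.mulVec cs = v := by
    rw [hcs, Matrix.mulVec_mulVec, Matrix.mul_nonsing_inv _ hdet, Matrix.one_mulVec]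
  -- expansion of the objective
  have hexp : ∀ c : Fin (n + 1) → ℝ,
      (∫ ω, (X ω - ∑ j : Fin (n + 1), c j * Y ω ^ (j : ℕ)) ^ 2 ∂P)
        = (∫ ω, X ω ^ 2 ∂P) - 2 * (c ⬝ᵥ v) + c ⬝ᵥ M.mulVec c := by
    intro c
    have hpt : ∀ ω, (X ω - ∑ j : Fin (n + 1), c j * Y ω ^ (j : ℕ)) ^ 2
        = X ω ^ 2 - (∑ j : Fin (n + 1), (2 * c j) * (X ω * Y ω ^ (j : ℕ)))
          + ∑ i : Fin (n + 1), ∑ j : Fin (n + 1), (c i * c j) * Y ω ^ ((i : ℕ) + (j : ℕ)) := by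
      intro ω
      rw [← hsq c ω]
      have e1 : (∑ j : Fin (n + 1), (2 * c j) * (X ω * Y ω ^ (j : ℕ)))
          = 2 * X ω * ∑ j : Fin (n + 1), c j * Y ω ^ (j : ℕ) := by
        rw [Finset.mul_sum]
        exact Finset.sum_congr rfl fun j _ => by ring
      rw [e1]; ring
    have hI2 : Integrable (fun ω => ∑ j : Fin (n + 1), (2 * c j) * (X ω * Y ω ^ (j : ℕ))) P :=
      integrable_finset_sum _ fun j _ => ((hXY j).const_mul _)
    calc (∫ ω, (X ω - ∑ j : Fin (n + 1), c j * Y ω ^ (j : ℕ)) ^ 2 ∂P)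
        = ∫ ω, (X ω ^ 2 - (∑ j : Fin (n + 1), (2 * c j) * (X ω * Y ω ^ (j : ℕ)))
            + ∑ i : Fin (n + 1), ∑ j : Fin (n + 1), (c i * c j) * Y ω ^ ((i : ℕ) + (j : ℕ))) ∂P :=
          integral_congr_ae (Filter.Eventually.of_forall fun ω => hpt ω)
      _ = (∫ ω, X ω ^ 2 ∂P) - (∫ ω, (∑ j : Fin (n + 1), (2 * c j) * (X ω * Y ω ^ (j : ℕ))) ∂P)
            + ∫ ω, (∑ i : Fin (n + 1), ∑ j : Fin (n + 1),
                (c i * c j) * Y ω ^ ((i : ℕ) + (j : ℕ))) ∂P := by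
          have hI12 : Integrable (fun ω => X ω ^ 2
              - ∑ j : Fin (n + 1), (2 * c j) * (X ω * Y ω ^ (j : ℕ))) P := hX2i.sub hI2
          rw [integral_add hI12 (hIdd c), integral_sub hX2i hI2]
      _ = (∫ ω, X ω ^ 2 ∂P) - 2 * (c ⬝ᵥ v) + c ⬝ᵥ M.mulVec c := by
          rw [hm2 c]
          congr 1
          congr 1
          rw [integral_finset_sum _ fun j _ => ((hXY j).const_mul _)]
          simp only [dotProduct, Finset.mul_sum]
          refine Finset.sum_congr rfl fun j _ => ?_
          rw [integral_const_mul]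
          simp only [hvdef, momVec]
          ring
  -- symmetry of the bilinear form
  have hswap : ∀ x y : Fin (n + 1) → ℝ, x ⬝ᵥ M.mulVec y = y ⬝ᵥ M.mulVec x := by
    intro x y
    simp only [dotProduct, Matrix.mulVec, Finset.mul_sum]
    rw [Finset.sum_comm]
    refine Finset.sum_congr rfl fun i _ => Finset.sum_congr rfl fun j _ => ?_
    simp only [hMdef, hankelMoment, Matrix.of_apply]
    rw [add_comm (j : ℕ)]
    ring
  -- minimality
  have hmin : ∀ c : Fin (n + 1) → ℝ,
      (∫ ω, (X ω - ∑ j : Fin (n + 1), cs j * Y ω ^ (j : ℕ)) ^ 2 ∂P)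
        ≤ ∫ ω, (X ω - ∑ j : Fin (n + 1), c j * Y ω ^ (j : ℕ)) ^ 2 ∂P := by
    intro c
    have hdiff : (∫ ω, (X ω - ∑ j : Fin (n + 1), c j * Y ω ^ (j : ℕ)) ^ 2 ∂P)
        - (∫ ω, (X ω - ∑ j : Fin (n + 1), cs j * Y ω ^ (j : ℕ)) ^ 2 ∂P)
        = (c - cs) ⬝ᵥ M.mulVec (c - cs) := by
      rw [hexp c, hexp cs]
      rw [Matrix.mulVec_sub, sub_dotProduct, dotProduct_sub,
        dotProduct_sub, ← hMc, hswap cs c]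
      ring
    have := hqnonneg (c - cs)
    linarith [hdiff]
  refine ⟨hunit, hmin, ?_⟩
  have hglb : pmmse P X Y n
      = ∫ ω, (X ω - ∑ j : Fin (n + 1), cs j * Y ω ^ (j : ℕ)) ^ 2 ∂P := by
    refine le_antisymm (ciInf_le ⟨0, ?_⟩ cs) (le_ciInf fun c => hmin c)
    rintro x ⟨c, rfl⟩
    exact integral_nonneg fun ω => sq_nonneg _
  rw [hglb, hexp cs]
  have h1 : cs ⬝ᵥ M.mulVec cs = cs ⬝ᵥ v := by rw [hMc]
  rw [h1, dotProduct_comm v cs]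
  ring
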